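/- Let a be a nonzero real number and define φ(s) = (a·s + sqrt(1-s²))·exp(a·s/(a·s + sqrt(1-s²))) on an open interval where a·s + sqrt(1-s²) > 0 and |s| < 1. Then the function Q(s) = φ'(s)/(φ(s) - s·φ'(s)) equals 2a·sqrt(1-s²) + (a²-1)·s. -/

import Mathlib

open Real

theorem stmt_2 (a : ℝ) (ha : a ≠ 0) (φ : ℝ → ℝ)
    (hφ : ∀ s : ℝ, φ s =
      (a * s + Real.sqrt (1 - s ^ 2)) * Real.exp (a * s / (a * s + Real.sqrt (1 - s ^ 2))))
    (s : ℝ) (hs : |s| < 1) (hpos : 0 < a * s + Real.sqrt (1 - s ^ 2))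
    (hden : φ s - s * deriv φ s ≠ 0) :
    deriv φ s / (φ s - s * deriv φ s) =
      2 * a * Real.sqrt (1 - s ^ 2) + (a ^ 2 - 1) * s := by
  have hφeq : φ = fun x => (a * x + Real.sqrt (1 - x ^ 2)) *
      Real.exp (a * x / (a * x + Real.sqrt (1 - x ^ 2))) := funext hφ
  set r := Real.sqrt (1 - s ^ 2) with hrdef
  have h1s : (0:ℝ) < 1 - s ^ 2 := by nlinarith [abs_nonneg s, sq_abs s, hs]
  have hr : 0 < r := Real.sqrt_pos.mpr h1s
  have hr2 : r ^ 2 = 1 - s ^ 2 := Real.sq_sqrt h1s.le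
  set u : ℝ := a * s + r with hudef
  have hu : u ≠ 0 := ne_of_gt hpos
  set e : ℝ := Real.exp (a * s / u) with hedef
  have he : e ≠ 0 := Real.exp_ne_zero _
  -- derivative of inner 1 - x^2
  have h1 : HasDerivAt (fun x : ℝ => 1 - x ^ 2) (-(2 * s)) s := by
    simpa using (hasDerivAt_pow 2 s).const_sub 1
  have h2 : HasDerivAt (fun x : ℝ => Real.sqrt (1 - x ^ 2))
      (1 / (2 * r) * (-(2 * s))) s := by
    have := (Real.hasDerivAt_sqrt (ne_of_gt h1s)).comp s h1
    simpa [hrdef, Function.comp_def] using this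
  have h3 : HasDerivAt (fun x : ℝ => a * x + Real.sqrt (1 - x ^ 2))
      (a + 1 / (2 * r) * (-(2 * s))) s := by
    simpa [Pi.add_def] using ((hasDerivAt_id s).const_mul a).add h2
  set u' : ℝ := a + 1 / (2 * r) * (-(2 * s)) with hu'def
  have h4 : HasDerivAt (fun x : ℝ => a * x / (a * x + Real.sqrt (1 - x ^ 2)))
      ((a * u - a * s * u') / u ^ 2) s := by
    have := ((hasDerivAt_id s).const_mul a).div h3 (by simpa [hudef] using hu)
    simpa [hudef, hu'def, Pi.div_def] using this
  have h5 : HasDerivAt (fun x : ℝ => Real.exp (a * x / (a * x + Real.sqrt (1 - x ^ 2))))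
      (e * ((a * u - a * s * u') / u ^ 2)) s := by
    simpa [hedef, hudef] using h4.exp
  have h6 : HasDerivAt φ
      (u' * e + u * (e * ((a * u - a * s * u') / u ^ 2))) s := by
    rw [hφeq]
    simpa [hudef, hedef, Pi.mul_def] using h3.mul h5
  have hD : deriv φ s = u' * e + u * (e * ((a * u - a * s * u') / u ^ 2)) :=
    h6.deriv
  have hφs : φ s = u * e := by rw [hφ s]
  have hus : u - s * u' = 1 / r := by
    rw [hu'def, hudef, eq_div_iff hr.ne']
    field_simp [hr.ne']
    linarith [hr2]
  have hD2 : deriv φ s = e * (u' + a / (r * u)) := by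
    rw [hD]
    have h7 : a * u - a * s * u' = a * (u - s * u') := by ring
    rw [h7, hus]
    field_simp
  have hsub2 : φ s - s * deriv φ s = e / u := by
    rw [hφs, hD2]
    have h8 : u * e - s * (e * (u' + a / (r * u))) =
        e * ((u - s * u') - s * a / (r * u)) := by field_simp; ring
    rw [h8, hus]
    have h9 : u - a * s = r := by rw [hudef]; ring
    field_simp
    linear_combination e * r * h9
  rw [hsub2, hD2, div_div_eq_mul_div]
  have h10 : e * (u' + a / (r * u)) * u / e = u * u' + a / r := by
    field_simp
  rw [h10, hu'def, hudef]
  field_simp [hr.ne']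
  linear_combination (-a) * hr2
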